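/- For all u₁, …, uₙ ∈ ℝ^d, all x, y ∈ ℝ^d, and γ ∈ (0,1], ∏_{j=1}^n |e^{-i⟨uⱼ,x⟩} - e^{-i⟨uⱼ,y⟩}| ≤ 2^{(1-γ)n} |x-y|^{nγ} · Σ' ∏_{j=1}^n |u_{j,k_j}|^γ, where the sum Σ' is over all sequences (k₁,…,kₙ) ∈ {1,…,d}ⁿ and u_{j,k} denotes the k-th coordinate of uⱼ. -/

import Mathlib

open RealInnerProductSpace

private lemma aux_exp_one (t : ℝ) :
    ‖Complex.exp (t * Complex.I) - 1‖ ≤ min 2 |t| := by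
  refine le_min ?_ ?_
  · calc ‖Complex.exp (t * Complex.I) - 1‖
        ≤ ‖Complex.exp (t * Complex.I)‖ + ‖(1:ℂ)‖ :=
          norm_sub_le _ _
      _ = 2 := by rw [Complex.norm_exp_ofReal_mul_I, norm_one]; norm_num
  · have h : Complex.exp (t * Complex.I) - 1
        = ((Real.cos t - 1 : ℝ) : ℂ) + (Real.sin t : ℝ) * Complex.I := by
      rw [Complex.exp_mul_I]
      push_cast
      ring
    rw [h, Complex.norm_add_mul_I]
    have h2 : (Real.cos t - 1) ^ 2 + Real.sin t ^ 2 = 2 - 2 * Real.cos t := by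
      nlinarith [Real.sin_sq_add_cos_sq t]
    rw [h2]
    calc Real.sqrt (2 - 2 * Real.cos t) ≤ Real.sqrt (t ^ 2) := by
          apply Real.sqrt_le_sqrt
          nlinarith [Real.one_sub_sq_div_two_le_cos (x := t)]
      _ = |t| := Real.sqrt_sq_eq_abs t

private lemma aux_exp_sub (a b : ℝ) :
    ‖Complex.exp ((a : ℂ) * Complex.I) - Complex.exp ((b : ℂ) * Complex.I)‖
      ≤ min 2 |a - b| := by
  have h : Complex.exp ((a : ℂ) * Complex.I) - Complex.exp ((b : ℂ) * Complex.I)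
      = Complex.exp ((b : ℂ) * Complex.I) * (Complex.exp (((a - b : ℝ) : ℂ) * Complex.I) - 1) := by
    rw [mul_sub, mul_one, ← Complex.exp_add]
    push_cast
    ring_nf
  rw [h, norm_mul, Complex.norm_exp_ofReal_mul_I, one_mul]
  exact aux_exp_one _

private lemma aux_min_le (γ : ℝ) (hγ0 : 0 < γ) (hγ1 : γ ≤ 1) (t : ℝ) :
    min 2 |t| ≤ 2 ^ (1 - γ) * |t| ^ γ := by
  rcases le_total |t| 2 with h | h
  · rcases eq_or_ne t 0 with rfl | ht
    · simp [Real.zero_rpow hγ0.ne']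
    · have h0 : 0 < |t| := abs_pos.2 ht
      calc min 2 |t| ≤ |t| := min_le_right _ _
        _ = |t| ^ γ * |t| ^ (1 - γ) := by
            rw [← Real.rpow_add h0]; simp
        _ ≤ |t| ^ γ * 2 ^ (1 - γ) := by
            apply mul_le_mul_of_nonneg_left _ (Real.rpow_nonneg h0.le _)
            exact Real.rpow_le_rpow h0.le h (by linarith)
        _ = 2 ^ (1 - γ) * |t| ^ γ := mul_comm _ _
  · calc min 2 |t| ≤ 2 := min_le_left _ _
      _ = 2 ^ γ * 2 ^ (1 - γ) := by
          rw [← Real.rpow_add two_pos]; simp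
      _ ≤ |t| ^ γ * 2 ^ (1 - γ) := by
          apply mul_le_mul_of_nonneg_right _ (Real.rpow_nonneg (by norm_num) _)
          exact Real.rpow_le_rpow (by norm_num) h hγ0.le
      _ = 2 ^ (1 - γ) * |t| ^ γ := mul_comm _ _

private lemma aux_add_rpow (a b : ℝ) (ha : 0 ≤ a) (hb : 0 ≤ b) {γ : ℝ}
    (hγ0 : 0 ≤ γ) (hγ1 : γ ≤ 1) : (a + b) ^ γ ≤ a ^ γ + b ^ γ := by
  lift a to NNReal using ha
  lift b to NNReal using hb
  exact_mod_cast NNReal.rpow_add_le_add_rpow a b hγ0 hγ1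

private lemma aux_sum_rpow {ι : Type*} (s : Finset ι) (f : ι → ℝ) (hf : ∀ i ∈ s, 0 ≤ f i)
    {γ : ℝ} (hγ0 : 0 < γ) (hγ1 : γ ≤ 1) :
    (∑ i ∈ s, f i) ^ γ ≤ ∑ i ∈ s, f i ^ γ := by
  classical
  induction s using Finset.induction with
  | empty => simp [Real.zero_rpow hγ0.ne']
  | insert a s hnot ih =>
    rw [Finset.sum_insert hnot, Finset.sum_insert hnot]
    have hfa : 0 ≤ f a := hf a (Finset.mem_insert_self _ _)
    have hfs : 0 ≤ ∑ i ∈ s, f i :=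
      Finset.sum_nonneg fun i hi => hf i (Finset.mem_insert_of_mem hi)
    calc (f a + ∑ i ∈ s, f i) ^ γ ≤ f a ^ γ + (∑ i ∈ s, f i) ^ γ :=
          aux_add_rpow _ _ hfa hfs hγ0.le hγ1
      _ ≤ f a ^ γ + ∑ i ∈ s, f i ^ γ := by
          gcongr
          exact ih fun i hi => hf i (Finset.mem_insert_of_mem hi)

private lemma aux_coord {d : ℕ} (v : EuclideanSpace ℝ (Fin d)) (k : Fin d) : |v k| ≤ ‖v‖ := by
  rw [EuclideanSpace.norm_eq, ← Real.sqrt_sq_eq_abs]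
  apply Real.sqrt_le_sqrt
  have := Finset.single_le_sum (f := fun i => ‖v i‖ ^ 2)
    (fun i _ => sq_nonneg _) (Finset.mem_univ k)
  simpa [Real.norm_eq_abs, sq_abs] using this

private lemma aux_inner_le {d : ℕ} (u v : EuclideanSpace ℝ (Fin d)) :
    |⟪u, v⟫| ≤ ‖v‖ * ∑ k, |u k| := by
  have h : ⟪u, v⟫ = ∑ k, u k * v k := by
    simp [PiLp.inner_apply, RCLike.inner_apply, mul_comm]
  rw [h, Finset.mul_sum]
  calc |∑ k, u k * v k| ≤ ∑ k, |u k * v k| := Finset.abs_sum_le_sum_abs _ _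
    _ ≤ ∑ k, ‖v‖ * |u k| := by
        apply Finset.sum_le_sum
        intro k _
        rw [abs_mul, mul_comm]
        exact mul_le_mul_of_nonneg_right (aux_coord v k) (abs_nonneg _)

theorem stmt_15 (d n : ℕ) (γ : ℝ) (hγ : γ ∈ Set.Ioc (0:ℝ) 1)
    (u : Fin n → EuclideanSpace ℝ (Fin d)) (x y : EuclideanSpace ℝ (Fin d)) :
    (∏ j, ‖
        (Complex.exp (-(⟪u j, x⟫ : ℝ) * Complex.I)
          - Complex.exp (-(⟪u j, y⟫ : ℝ) * Complex.I))‖)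
      ≤ 2 ^ ((1 - γ) * n) * ‖x - y‖ ^ ((n : ℝ) * γ)
          * ∑ k : Fin n → Fin d, ∏ j, |u j (k j)| ^ γ := by
  obtain ⟨hγ0, hγ1⟩ := hγ
  have hj : ∀ j, ‖
        (Complex.exp (-(⟪u j, x⟫ : ℝ) * Complex.I)
          - Complex.exp (-(⟪u j, y⟫ : ℝ) * Complex.I))‖
      ≤ 2 ^ (1 - γ) * (‖x - y‖ ^ γ * ∑ k, |u j k| ^ γ) := by
    intro j
    have h1 := aux_exp_sub (-(⟪u j, x⟫ : ℝ)) (-(⟪u j, y⟫ : ℝ))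
    have heq : |(-(⟪u j, x⟫ : ℝ)) - (-(⟪u j, y⟫ : ℝ))| = |⟪u j, x - y⟫| := by
      rw [inner_sub_right]
      rw [neg_sub_neg, abs_sub_comm]
    rw [heq] at h1
    push_cast at h1
    calc ‖
          (Complex.exp (-(⟪u j, x⟫ : ℝ) * Complex.I)
            - Complex.exp (-(⟪u j, y⟫ : ℝ) * Complex.I))‖
        ≤ min 2 |⟪u j, x - y⟫| := h1
      _ ≤ 2 ^ (1 - γ) * |⟪u j, x - y⟫| ^ γ := aux_min_le γ hγ0 hγ1 _
      _ ≤ 2 ^ (1 - γ) * (‖x - y‖ ^ γ * ∑ k, |u j k| ^ γ) := by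
          apply mul_le_mul_of_nonneg_left _ (Real.rpow_nonneg (by norm_num) _)
          calc |⟪u j, x - y⟫| ^ γ ≤ (‖x - y‖ * ∑ k, |u j k|) ^ γ :=
                Real.rpow_le_rpow (abs_nonneg _) (aux_inner_le _ _) hγ0.le
            _ = ‖x - y‖ ^ γ * (∑ k, |u j k|) ^ γ :=
                Real.mul_rpow (norm_nonneg _) (Finset.sum_nonneg fun _ _ => abs_nonneg _)
            _ ≤ ‖x - y‖ ^ γ * ∑ k, |u j k| ^ γ := by
                apply mul_le_mul_of_nonneg_left _ (Real.rpow_nonneg (norm_nonneg _) _)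
                exact aux_sum_rpow _ _ (fun _ _ => abs_nonneg _) hγ0 hγ1
  calc (∏ j, ‖
        (Complex.exp (-(⟪u j, x⟫ : ℝ) * Complex.I)
          - Complex.exp (-(⟪u j, y⟫ : ℝ) * Complex.I))‖)
      ≤ ∏ j, (2 ^ (1 - γ) * (‖x - y‖ ^ γ * ∑ k, |u j k| ^ γ)) :=
        Finset.prod_le_prod (fun j _ => norm_nonneg _) (fun j _ => hj j)
    _ = 2 ^ ((1 - γ) * n) * ‖x - y‖ ^ ((n : ℝ) * γ)
        * ∑ k : Fin n → Fin d, ∏ j, |u j (k j)| ^ γ := by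
        rw [Finset.prod_mul_distrib, Finset.prod_mul_distrib]
        rw [Finset.prod_const, Finset.prod_const, Finset.card_univ, Fintype.card_fin]
        rw [← Real.rpow_natCast (2 ^ (1 - γ)) n, ← Real.rpow_mul (by norm_num : (0:ℝ) ≤ 2)]
        rw [← Real.rpow_natCast (‖x - y‖ ^ γ) n, ← Real.rpow_mul (norm_nonneg _), mul_comm γ (n : ℝ)]
        have hps : (∏ j, ∑ k, |u j k| ^ γ) = ∑ k : Fin n → Fin d, ∏ j, |u j (k j)| ^ γ := by
          rw [Finset.prod_univ_sum, Fintype.piFinset_univ]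
        rw [hps]
        ring
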